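/- Let X be a ℂ^n-valued random vector with covariance matrix Σ, and let H = V diag(h(λ_1),…,h(λ_n)) V^H be a graph filter where Σ = V diag(p_1,…,p_n) V^H is simultaneously diagonalizable with the graph shift operator S = V Λ V^H. Then the filtered signal H X has covariance V diag(|h(λ_1)|² p_1,…,|h(λ_n)|² p_n) V^H; in particular, H X is also weakly stationary with respect to S, with graph power spectral density |h(λ_ℓ)|² p_ℓ. -/

import Mathlib

open Matrix MeasureTheory

/-- Covariance-type matrix `E[(X - E X)(Y - E Y)ᴴ]` of two `ℂⁿ`-valued random vectors. -/
noncomputable def crossCov {Ω : Type*} [MeasurableSpace Ω] (μ : Measure Ω) {n : ℕ}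
    (X Y : Ω → Fin n → ℂ) : Matrix (Fin n) (Fin n) ℂ :=
  Matrix.of fun k l =>
    ∫ ω, (X ω k - ∫ ω', X ω' k ∂μ) * (starRingEnd ℂ) (Y ω l - ∫ ω', Y ω' l ∂μ) ∂μ

lemma integrable_mul_conj {Ω : Type*} [MeasurableSpace Ω] {μ : Measure Ω}
    {f g : Ω → ℂ} (hf : MemLp f 2 μ) (hg : MemLp g 2 μ) :
    Integrable (fun ω => f ω * (starRingEnd ℂ) (g ω)) μ := by
  have h := L2.integrable_inner (𝕜 := ℂ) (hg.toLp g) (hf.toLp f)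
  refine h.congr ?_
  filter_upwards [hg.coeFn_toLp, hf.coeFn_toLp] with ω h1 h2
  simp [h1, h2, RCLike.inner_apply, mul_comm]

/-- Bilinearity / transformation rule: the cross-covariance of `A ∘ X` with itself
is `A * crossCov * Aᴴ`. -/
lemma crossCov_mulVec {Ω : Type*} [MeasurableSpace Ω] (μ : Measure Ω) [IsProbabilityMeasure μ]
    {n : ℕ} (X : Ω → Fin n → ℂ) (hX : ∀ k, MemLp (fun ω => X ω k) 2 μ)
    (A : Matrix (Fin n) (Fin n) ℂ) :
    crossCov μ (fun ω => A.mulVec (X ω)) (fun ω => A.mulVec (X ω)) =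
      A * crossCov μ X X * Aᴴ := by
  have hXi : ∀ k, Integrable (fun ω => X ω k) μ := fun k => (hX k).integrable one_le_two
  -- mean of the transformed signal
  have hmean : ∀ k, (∫ ω', A.mulVec (X ω') k ∂μ) = ∑ i, A k i * ∫ ω', X ω' i ∂μ := by
    intro k
    simp only [Matrix.mulVec, dotProduct]
    rw [integral_finset_sum]
    · exact Finset.sum_congr rfl fun i _ => by rw [integral_const_mul]
    · exact fun i _ => (hXi i).const_mul _
  have hXc : ∀ k, MemLp (fun ω => X ω k - ∫ ω', X ω' k ∂μ) 2 μ :=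
    fun k => (hX k).sub (memLp_const _)
  ext k l
  simp only [crossCov, Matrix.of_apply]
  have hrw : ∀ ω, (A.mulVec (X ω) k - ∫ ω', A.mulVec (X ω') k ∂μ) *
      (starRingEnd ℂ) (A.mulVec (X ω) l - ∫ ω', A.mulVec (X ω') l ∂μ) =
      ∑ i, ∑ j, (A k i * (starRingEnd ℂ) (A l j)) *
        ((X ω i - ∫ ω', X ω' i ∂μ) * (starRingEnd ℂ) (X ω j - ∫ ω', X ω' j ∂μ)) := by
    intro ω
    rw [hmean k, hmean l]
    simp only [Matrix.mulVec, dotProduct, ← Finset.sum_sub_distrib, ← mul_sub,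
      map_sum, Finset.sum_mul_sum]
    refine Finset.sum_congr rfl fun i _ => Finset.sum_congr rfl fun j _ => by
      simp only [map_sub, _root_.map_mul]; ring
  simp only [hrw]
  rw [integral_finset_sum _ (fun i _ => integrable_finset_sum _
    (fun j _ => ((integrable_mul_conj (hXc i) (hXc j)).const_mul _)))]
  have : ∀ i, ∫ ω, ∑ j, (A k i * (starRingEnd ℂ) (A l j)) *
      ((X ω i - ∫ ω', X ω' i ∂μ) * (starRingEnd ℂ) (X ω j - ∫ ω', X ω' j ∂μ)) ∂μ =
      ∑ j, (A k i * (starRingEnd ℂ) (A l j)) *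
      ∫ ω, (X ω i - ∫ ω', X ω' i ∂μ) * (starRingEnd ℂ) (X ω j - ∫ ω', X ω' j ∂μ) ∂μ := by
    intro i
    rw [integral_finset_sum _ (fun j _ => (integrable_mul_conj (hXc i) (hXc j)).const_mul _)]
    exact Finset.sum_congr rfl fun j _ => integral_const_mul _ _
  simp only [this]
  simp only [Matrix.mul_apply, Matrix.conjTranspose_apply, crossCov, Matrix.of_apply,
    Finset.sum_mul]
  rw [Finset.sum_comm]
  refine Finset.sum_congr rfl fun j _ => Finset.sum_congr rfl fun i _ => by
    simp [Matrix.mul_apply]; ring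

/-- If a random vector `X` has covariance `Σ = V diag(p₁,…,p_n) Vᴴ`
(simultaneously diagonalizable with the shift `S = V Λ Vᴴ`), then the filtered signal `H X`,
with `H = V diag(h(λ₁),…,h(λ_n)) Vᴴ`, has covariance
`V diag(|h(λ₁)|² p₁, …, |h(λ_n)|² p_n) Vᴴ`; in particular it is again weakly stationary
with respect to `S`, with power spectral density `|h(λ_ℓ)|² p_ℓ`. -/
theorem stmt_14 {Ω : Type*} [MeasurableSpace Ω] (μ : Measure Ω) [IsProbabilityMeasure μ]
    {n : ℕ} (X : Ω → Fin n → ℂ)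
    (hX : ∀ k, MemLp (fun ω => X ω k) 2 μ)
    (V : Matrix (Fin n) (Fin n) ℂ) (hV : V ∈ Matrix.unitaryGroup (Fin n) ℂ)
    (lam : Fin n → ℂ) (psd : Fin n → ℂ)
    (hSig : crossCov μ X X = V * Matrix.diagonal psd * Vᴴ)
    (h : ℂ → ℂ) (H : Matrix (Fin n) (Fin n) ℂ)
    (hH : H = V * Matrix.diagonal (fun ℓ => h (lam ℓ)) * Vᴴ) :
    crossCov μ (fun ω => H.mulVec (X ω)) (fun ω => H.mulVec (X ω)) =
      V * Matrix.diagonal (fun ℓ => ((‖h (lam ℓ)‖ ^ 2 : ℝ) : ℂ) * psd ℓ) * Vᴴ := by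
  have hVV : Vᴴ * V = 1 := (Matrix.mem_unitaryGroup_iff'.mp hV)
  rw [crossCov_mulVec μ X hX H, hSig, hH]
  have : (V * Matrix.diagonal (fun ℓ => h (lam ℓ)) * Vᴴ)ᴴ =
      V * Matrix.diagonal (fun ℓ => (starRingEnd ℂ) (h (lam ℓ))) * Vᴴ := by
    simp [Matrix.conjTranspose_mul, Matrix.diagonal_conjTranspose, Matrix.mul_assoc]
    rfl
  rw [this]
  have key : ∀ (d e : Fin n → ℂ),
      (V * Matrix.diagonal d * Vᴴ) * (V * Matrix.diagonal e * Vᴴ) =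
      V * Matrix.diagonal (fun ℓ => d ℓ * e ℓ) * Vᴴ := by
    intro d e
    calc (V * Matrix.diagonal d * Vᴴ) * (V * Matrix.diagonal e * Vᴴ)
        = V * Matrix.diagonal d * (Vᴴ * V) * (Matrix.diagonal e * Vᴴ) := by
          simp only [Matrix.mul_assoc]
      _ = V * (Matrix.diagonal d * Matrix.diagonal e) * Vᴴ := by
          rw [hVV]; simp only [Matrix.mul_one, Matrix.mul_assoc]
      _ = V * Matrix.diagonal (fun ℓ => d ℓ * e ℓ) * Vᴴ := by
          rw [Matrix.diagonal_mul_diagonal]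
  rw [key, key]
  have hfun : (fun ℓ => h (lam ℓ) * psd ℓ * (starRingEnd ℂ) (h (lam ℓ))) =
      fun ℓ => ((‖h (lam ℓ)‖ ^ 2 : ℝ) : ℂ) * psd ℓ := by
    funext ℓ
    rw [mul_right_comm, Complex.mul_conj, Complex.normSq_eq_norm_sq]
  rw [hfun]
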